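/- Let d ≥ 2 be an integer, ω = exp(2πi/d), Ω = exp(2πi/3), and let α : {1,2,3} × {0,1,2} → ℤ be any function. Then (1/27) · Σ_{n=1}^{d−1} Σ_{γ=0}^{2} Π_{j=1}^{3} ( Σ_{η_j=0}^{2} Ω^{γ η_j} · exp(2πi n η_j/(3d)) · ω^{n α(j, η_j)} ) = (d/9) · Σ_{η₁=0}^{2} Σ_{η₂=0}^{2} Σ_{η₃=0}^{2} δ₃(η̃) · δ_d(η̃/3 + α̃) − 1, where η̃ = η₁+η₂+η₃, α̃ = α(1,η₁)+α(2,η₂)+α(3,η₃), δ₃(x) = 1 if 3 divides x and 0 otherwise, and δ_d(x) = 1 if d divides x and 0 otherwise (in the term δ_d(η̃/3 + α̃), the quantity η̃/3 is an integer whenever δ₃(η̃) = 1). -/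

import Mathlib

open Complex Finset

lemma geom_sum_primroot {ζ : ℂ} {D : ℕ} (hD : D ≠ 0) (hζ : IsPrimitiveRoot ζ D) (m : ℤ) :
    ∑ n ∈ Finset.range D, ζ ^ ((n : ℤ) * m) = if (D : ℤ) ∣ m then (D : ℂ) else 0 := by
  have hrw : ∀ n ∈ Finset.range D, ζ ^ ((n : ℤ) * m) = (ζ ^ m) ^ n := by
    intro n _
    rw [mul_comm, zpow_mul, ← zpow_natCast (ζ ^ m) n]
  rw [Finset.sum_congr rfl hrw]
  by_cases h : (D : ℤ) ∣ m
  · rw [if_pos h, (hζ.zpow_eq_one_iff_dvd m).2 h]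
    simp
  · rw [if_neg h]
    have hne : ζ ^ m ≠ 1 := fun hh => h ((hζ.zpow_eq_one_iff_dvd m).1 hh)
    rw [geom_sum_eq hne]
    have hD1 : (ζ ^ m) ^ D = 1 := by
      rw [← zpow_natCast (ζ ^ m) D, ← zpow_mul, mul_comm, zpow_mul, zpow_natCast,
        hζ.pow_eq_one, one_zpow]
    rw [hD1, sub_self, zero_div]

lemma geom_sum_primroot_nat {ζ : ℂ} {D : ℕ} (hD : D ≠ 0) (hζ : IsPrimitiveRoot ζ D) (m : ℕ) :
    ∑ n ∈ Finset.range D, ζ ^ (n * m) = if D ∣ m then (D : ℂ) else 0 := by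
  have h := geom_sum_primroot hD hζ (m : ℤ)
  calc ∑ n ∈ Finset.range D, ζ ^ (n * m)
      = ∑ n ∈ Finset.range D, ζ ^ ((n : ℤ) * (m : ℤ)) := by
        refine Finset.sum_congr rfl fun n _ => ?_
        rw [← zpow_natCast ζ (n*m)]
        push_cast
        ring_nf
    _ = if (D:ℤ) ∣ (m:ℤ) then (D : ℂ) else 0 := h
    _ = if D ∣ m then (D : ℂ) else 0 := by simp [Int.natCast_dvd_natCast]

lemma icc_geom_sum {ω : ℂ} {d : ℕ} (hd : d ≠ 0) (hω : IsPrimitiveRoot ω d) (m : ℤ) :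
    ∑ n ∈ Finset.Icc 1 (d - 1), ω ^ ((n : ℤ) * m)
      = (if (d : ℤ) ∣ m then (d : ℂ) else 0) - 1 := by
  have h0 : 0 < d := Nat.pos_of_ne_zero hd
  have hIc : Finset.Icc 1 (d - 1) = Finset.Ico 1 d := by
    rw [← Finset.Ico_add_one_right_eq_Icc]
    congr 1
    omega
  have hg := geom_sum_primroot hd hω m
  rw [Finset.range_eq_Ico, Finset.sum_eq_sum_Ico_succ_bot h0] at hg
  simp only [Nat.cast_zero, zero_mul, zpow_zero] at hg
  rw [hIc]
  linear_combination hg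

lemma swap_out {ι : Type*} (S : Finset ι) (f : ι → Fin 3 → Fin 3 → Fin 3 → ℂ) :
    ∑ n ∈ S, ∑ a : Fin 3, ∑ b : Fin 3, ∑ c : Fin 3, f n a b c
    = ∑ a : Fin 3, ∑ b : Fin 3, ∑ c : Fin 3, ∑ n ∈ S, f n a b c := by
  rw [Finset.sum_comm]
  refine Finset.sum_congr rfl fun a _ => ?_
  rw [Finset.sum_comm]
  exact Finset.sum_congr rfl fun b _ => Finset.sum_comm

lemma key_triple (d : ℕ) (hd : 2 ≤ d) (ω Ω : ℂ)
    (hω' : IsPrimitiveRoot ω d) (hΩ' : IsPrimitiveRoot Ω 3)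
    (hωe : ω = Complex.exp (2 * Real.pi * Complex.I / d))
    (α : Fin 3 → Fin 3 → ℤ) (η₁ η₂ η₃ : Fin 3) :
    ∑ n ∈ Finset.Icc 1 (d - 1), ∑ γ ∈ Finset.range 3,
      ((Ω ^ (γ * (η₁:ℕ)) * Complex.exp (2 * Real.pi * Complex.I * n * (η₁:ℕ) / (3 * d)) * ω ^ ((n:ℤ) * α 0 η₁)) *
       (Ω ^ (γ * (η₂:ℕ)) * Complex.exp (2 * Real.pi * Complex.I * n * (η₂:ℕ) / (3 * d)) * ω ^ ((n:ℤ) * α 1 η₂)) *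
       (Ω ^ (γ * (η₃:ℕ)) * Complex.exp (2 * Real.pi * Complex.I * n * (η₃:ℕ) / (3 * d)) * ω ^ ((n:ℤ) * α 2 η₃)))
    = (if 3 ∣ ((η₁:ℕ)+(η₂:ℕ)+(η₃:ℕ)) then (3:ℂ) else 0) *
      ((if (d:ℤ) ∣ ((((η₁:ℕ)+(η₂:ℕ)+(η₃:ℕ) : ℕ):ℤ)/3 + (α 0 η₁ + α 1 η₂ + α 2 η₃)) then (d:ℂ) else 0) - 1) := by
  have hd0 : d ≠ 0 := by omega
  have hω0 : ω ≠ 0 := hω'.ne_zero hd0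
  have hdC : (d:ℂ) ≠ 0 := Nat.cast_ne_zero.2 hd0
  set s : ℕ := (η₁:ℕ)+(η₂:ℕ)+(η₃:ℕ) with hs
  set a : ℤ := α 0 η₁ + α 1 η₂ + α 2 η₃ with ha
  have hterm : ∀ n γ : ℕ,
      ((Ω ^ (γ * (η₁:ℕ)) * Complex.exp (2 * Real.pi * Complex.I * n * (η₁:ℕ) / (3 * d)) * ω ^ ((n:ℤ) * α 0 η₁)) *
       (Ω ^ (γ * (η₂:ℕ)) * Complex.exp (2 * Real.pi * Complex.I * n * (η₂:ℕ) / (3 * d)) * ω ^ ((n:ℤ) * α 1 η₂)) *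
       (Ω ^ (γ * (η₃:ℕ)) * Complex.exp (2 * Real.pi * Complex.I * n * (η₃:ℕ) / (3 * d)) * ω ^ ((n:ℤ) * α 2 η₃)))
      = Ω ^ (γ * s) *
          (Complex.exp (2 * Real.pi * Complex.I * n * s / (3 * d)) * ω ^ ((n:ℤ) * a)) := by
    intro n γ
    have e1 : Ω ^ (γ * (η₁:ℕ)) * Ω ^ (γ * (η₂:ℕ)) * Ω ^ (γ * (η₃:ℕ)) = Ω ^ (γ * s) := by
      rw [← pow_add, ← pow_add, hs]
      ring_nf
    have e2 : Complex.exp (2 * Real.pi * Complex.I * n * (η₁:ℕ) / (3 * d)) *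
        Complex.exp (2 * Real.pi * Complex.I * n * (η₂:ℕ) / (3 * d)) *
        Complex.exp (2 * Real.pi * Complex.I * n * (η₃:ℕ) / (3 * d)) =
        Complex.exp (2 * Real.pi * Complex.I * n * s / (3 * d)) := by
      rw [← Complex.exp_add, ← Complex.exp_add, ← add_div, ← add_div]
      congr 1
      rw [hs]
      push_cast
      ring
    have e3 : ω ^ ((n:ℤ) * α 0 η₁) * ω ^ ((n:ℤ) * α 1 η₂) * ω ^ ((n:ℤ) * α 2 η₃)
        = ω ^ ((n:ℤ) * a) := by
      rw [← zpow_add₀ hω0, ← zpow_add₀ hω0, ha]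
      ring_nf
    calc _ = (Ω ^ (γ * (η₁:ℕ)) * Ω ^ (γ * (η₂:ℕ)) * Ω ^ (γ * (η₃:ℕ))) *
        ((Complex.exp (2 * Real.pi * Complex.I * n * (η₁:ℕ) / (3 * d)) *
          Complex.exp (2 * Real.pi * Complex.I * n * (η₂:ℕ) / (3 * d)) *
          Complex.exp (2 * Real.pi * Complex.I * n * (η₃:ℕ) / (3 * d))) *
         (ω ^ ((n:ℤ) * α 0 η₁) * ω ^ ((n:ℤ) * α 1 η₂) * ω ^ ((n:ℤ) * α 2 η₃))) := by ring
    _ = _ := by rw [e1, e2, e3]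
  have hΩs := geom_sum_primroot_nat (by norm_num) hΩ' s
  have step1 : ∑ n ∈ Finset.Icc 1 (d - 1), ∑ γ ∈ Finset.range 3,
      Ω ^ (γ * s) * (Complex.exp (2 * Real.pi * Complex.I * n * s / (3 * d)) * ω ^ ((n:ℤ) * a))
      = (if 3 ∣ s then (3:ℂ) else 0) *
        ∑ n ∈ Finset.Icc 1 (d - 1),
          Complex.exp (2 * Real.pi * Complex.I * n * s / (3 * d)) * ω ^ ((n:ℤ) * a) := by
    rw [Finset.mul_sum]
    refine Finset.sum_congr rfl fun n _ => ?_
    rw [← Finset.sum_mul, hΩs]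
    norm_num
  rw [Finset.sum_congr rfl fun n _ => Finset.sum_congr rfl fun γ _ => hterm n γ, step1]
  by_cases h3 : 3 ∣ s
  · obtain ⟨k, hk⟩ := h3
    have hG : ∀ n : ℕ,
        Complex.exp (2 * Real.pi * Complex.I * n * s / (3 * d)) * ω ^ ((n:ℤ) * a)
        = ω ^ ((n:ℤ) * ((k:ℤ) + a)) := by
      intro n
      have hx : Complex.exp (2 * Real.pi * Complex.I * n * s / (3 * d)) = ω ^ (n * k) := by
        rw [hωe, ← Complex.exp_nat_mul]
        congr 1
        rw [hk]
        push_cast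
        field_simp
      rw [hx, ← zpow_natCast ω (n * k), ← zpow_add₀ hω0]
      congr 1
      push_cast
      ring
    rw [Finset.sum_congr rfl fun n _ => hG n, icc_geom_sum hd0 hω' ((k:ℤ) + a)]
    have hdiv : ((s : ℕ) : ℤ) / 3 + a = (k:ℤ) + a := by
      rw [hk]
      push_cast
      rw [Int.mul_ediv_cancel_left k (by norm_num)]
    rw [if_pos ⟨k, hk⟩, hdiv]
  · rw [if_neg h3, zero_mul, zero_mul]
/-- **Local-hidden-variable form of the generic Bell function for `(3,3,d)`.**
Replacing each observable by a predetermined eigenvalue `ω^(α (j, η_j))`, the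
classical Bell function equals `𝓛·d − 1`, where
`𝓛 = (1/9) Σ_η δ₃(η̃) δ_d(η̃/3 + α̃)`. -/
theorem lhv_bell_function_three_settings
    (d : ℕ) (hd : 2 ≤ d) (ω Ω : ℂ)
    (hω : ω = Complex.exp (2 * Real.pi * Complex.I / d))
    (hΩ : Ω = Complex.exp (2 * Real.pi * Complex.I / 3))
    (α : Fin 3 → Fin 3 → ℤ) :
    (1 / 27 : ℂ) *
      ∑ n ∈ Finset.Icc 1 (d - 1), ∑ γ ∈ Finset.range 3, ∏ j : Fin 3,
        ∑ η : Fin 3,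
          Ω ^ (γ * (η : ℕ)) *
            Complex.exp (2 * Real.pi * Complex.I * n * (η : ℕ) / (3 * d)) *
            ω ^ ((n : ℤ) * α j η)
    = (d : ℂ) / 9 *
        (∑ η₁ : Fin 3, ∑ η₂ : Fin 3, ∑ η₃ : Fin 3,
          (if 3 ∣ ((η₁ : ℕ) + (η₂ : ℕ) + (η₃ : ℕ)) then (1 : ℂ) else 0) *
          (if (d : ℤ) ∣
              ((((η₁ : ℕ) + (η₂ : ℕ) + (η₃ : ℕ) : ℕ) : ℤ) / 3 +
                (α 0 η₁ + α 1 η₂ + α 2 η₃))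
            then (1 : ℂ) else 0)) - 1 := by
  have hd0 : d ≠ 0 := by omega
  have hω' : IsPrimitiveRoot ω d := by
    rw [hω]; exact Complex.isPrimitiveRoot_exp d hd0
  have hΩ' : IsPrimitiveRoot Ω 3 := by
    rw [hΩ]
    have h := Complex.isPrimitiveRoot_exp 3 (by norm_num)
    simpa using h
  have expand : ∀ X Y Z : Fin 3 → ℂ,
      (∑ x : Fin 3, X x) * (∑ y : Fin 3, Y y) * (∑ z : Fin 3, Z z)
      = ∑ x : Fin 3, ∑ y : Fin 3, ∑ z : Fin 3, X x * Y y * Z z := by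
    intro X Y Z
    rw [Finset.sum_mul_sum, Finset.sum_mul]
    refine Finset.sum_congr rfl fun x _ => ?_
    rw [Finset.sum_mul]
    refine Finset.sum_congr rfl fun y _ => ?_
    rw [Finset.mul_sum]
  have hmain : ∑ n ∈ Finset.Icc 1 (d - 1), ∑ γ ∈ Finset.range 3, ∏ j : Fin 3,
        ∑ η : Fin 3,
          Ω ^ (γ * (η : ℕ)) *
            Complex.exp (2 * Real.pi * Complex.I * n * (η : ℕ) / (3 * d)) *
            ω ^ ((n : ℤ) * α j η)
      = ∑ η₁ : Fin 3, ∑ η₂ : Fin 3, ∑ η₃ : Fin 3,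
          (if 3 ∣ ((η₁:ℕ)+(η₂:ℕ)+(η₃:ℕ)) then (3:ℂ) else 0) *
          ((if (d:ℤ) ∣ ((((η₁:ℕ)+(η₂:ℕ)+(η₃:ℕ) : ℕ):ℤ)/3 +
              (α 0 η₁ + α 1 η₂ + α 2 η₃)) then (d:ℂ) else 0) - 1) := by
    calc ∑ n ∈ Finset.Icc 1 (d - 1), ∑ γ ∈ Finset.range 3, ∏ j : Fin 3,
        ∑ η : Fin 3,
          Ω ^ (γ * (η : ℕ)) *
            Complex.exp (2 * Real.pi * Complex.I * n * (η : ℕ) / (3 * d)) *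
            ω ^ ((n : ℤ) * α j η)
        = ∑ n ∈ Finset.Icc 1 (d - 1), ∑ γ ∈ Finset.range 3,
            ∑ η₁ : Fin 3, ∑ η₂ : Fin 3, ∑ η₃ : Fin 3,
            ((Ω ^ (γ * (η₁:ℕ)) * Complex.exp (2 * Real.pi * Complex.I * n * (η₁:ℕ) / (3 * d)) * ω ^ ((n:ℤ) * α 0 η₁)) *
             (Ω ^ (γ * (η₂:ℕ)) * Complex.exp (2 * Real.pi * Complex.I * n * (η₂:ℕ) / (3 * d)) * ω ^ ((n:ℤ) * α 1 η₂)) *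
             (Ω ^ (γ * (η₃:ℕ)) * Complex.exp (2 * Real.pi * Complex.I * n * (η₃:ℕ) / (3 * d)) * ω ^ ((n:ℤ) * α 2 η₃))) := by
          refine Finset.sum_congr rfl fun n _ => Finset.sum_congr rfl fun γ _ => ?_
          rw [Fin.prod_univ_three]
          exact expand _ _ _
      _ = ∑ n ∈ Finset.Icc 1 (d - 1),
            ∑ η₁ : Fin 3, ∑ η₂ : Fin 3, ∑ η₃ : Fin 3, ∑ γ ∈ Finset.range 3,
            ((Ω ^ (γ * (η₁:ℕ)) * Complex.exp (2 * Real.pi * Complex.I * n * (η₁:ℕ) / (3 * d)) * ω ^ ((n:ℤ) * α 0 η₁)) *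
             (Ω ^ (γ * (η₂:ℕ)) * Complex.exp (2 * Real.pi * Complex.I * n * (η₂:ℕ) / (3 * d)) * ω ^ ((n:ℤ) * α 1 η₂)) *
             (Ω ^ (γ * (η₃:ℕ)) * Complex.exp (2 * Real.pi * Complex.I * n * (η₃:ℕ) / (3 * d)) * ω ^ ((n:ℤ) * α 2 η₃))) := by
          exact Finset.sum_congr rfl fun n _ => swap_out _ _
      _ = ∑ η₁ : Fin 3, ∑ η₂ : Fin 3, ∑ η₃ : Fin 3,
            ∑ n ∈ Finset.Icc 1 (d - 1), ∑ γ ∈ Finset.range 3,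
            ((Ω ^ (γ * (η₁:ℕ)) * Complex.exp (2 * Real.pi * Complex.I * n * (η₁:ℕ) / (3 * d)) * ω ^ ((n:ℤ) * α 0 η₁)) *
             (Ω ^ (γ * (η₂:ℕ)) * Complex.exp (2 * Real.pi * Complex.I * n * (η₂:ℕ) / (3 * d)) * ω ^ ((n:ℤ) * α 1 η₂)) *
             (Ω ^ (γ * (η₃:ℕ)) * Complex.exp (2 * Real.pi * Complex.I * n * (η₃:ℕ) / (3 * d)) * ω ^ ((n:ℤ) * α 2 η₃))) := by
          exact swap_out _ _
      _ = _ := by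
          refine Finset.sum_congr rfl fun η₁ _ => Finset.sum_congr rfl fun η₂ _ =>
            Finset.sum_congr rfl fun η₃ _ => ?_
          exact key_triple d hd ω Ω hω' hΩ' hω α η₁ η₂ η₃
  rw [hmain]
  have hterm2 : ∀ (p q : Prop) [Decidable p] [Decidable q],
      (if p then (3:ℂ) else 0) * ((if q then (d:ℂ) else 0) - 1)
      = 3*(d:ℂ)*((if p then (1:ℂ) else 0)*(if q then (1:ℂ) else 0)) - 3*(if p then (1:ℂ) else 0) := by
    intro p q _ _
    by_cases hp : p <;> by_cases hq : q <;> simp [hp, hq] <;> ring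
  have h9 : ∑ η₁ : Fin 3, ∑ η₂ : Fin 3, ∑ η₃ : Fin 3,
      (if 3 ∣ ((η₁:ℕ)+(η₂:ℕ)+(η₃:ℕ)) then (1:ℂ) else 0) = 9 := by
    simp only [Fin.sum_univ_three, Fin.val_zero, Fin.val_one]
    norm_num
  have hsplit : ∑ η₁ : Fin 3, ∑ η₂ : Fin 3, ∑ η₃ : Fin 3,
      (if 3 ∣ ((η₁:ℕ)+(η₂:ℕ)+(η₃:ℕ)) then (3:ℂ) else 0) *
      ((if (d:ℤ) ∣ ((((η₁:ℕ)+(η₂:ℕ)+(η₃:ℕ) : ℕ):ℤ)/3 +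
          (α 0 η₁ + α 1 η₂ + α 2 η₃)) then (d:ℂ) else 0) - 1)
      = 3*(d:ℂ)*(∑ η₁ : Fin 3, ∑ η₂ : Fin 3, ∑ η₃ : Fin 3,
          (if 3 ∣ ((η₁:ℕ)+(η₂:ℕ)+(η₃:ℕ)) then (1:ℂ) else 0) *
          (if (d:ℤ) ∣ ((((η₁:ℕ)+(η₂:ℕ)+(η₃:ℕ) : ℕ):ℤ)/3 +
              (α 0 η₁ + α 1 η₂ + α 2 η₃)) then (1:ℂ) else 0))
        - 3*(∑ η₁ : Fin 3, ∑ η₂ : Fin 3, ∑ η₃ : Fin 3,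
          (if 3 ∣ ((η₁:ℕ)+(η₂:ℕ)+(η₃:ℕ)) then (1:ℂ) else 0)) := by
    simp only [hterm2, Finset.sum_sub_distrib, ← Finset.mul_sum]
  rw [hsplit, h9]
  ring
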